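/- With notation as above, the maps ∂_n = l_n − r_n satisfy ∂_{n−1} ∘ ∂_n = 0, i.e. (V_n, ∂_n) is a chain complex. -/

import Mathlib

namespace Stmt8

variable {X Y : Type*}

/-- The free `K`-module `V_n` on tuples in `Y^n × X^n`. -/
abbrev V (K : Type*) [CommRing K] (X Y : Type*) (n : ℕ) : Type _ :=
  ((Fin n → Y) × (Fin n → X)) →₀ K

/-- `λ_{n,i}` on generators: act on the entries before `i` by the `i`-th entry
and delete the `i`-th entry. -/
def lamTup (qop : X → X → X) (hop : X → X → Y → Y → Y) {n : ℕ} (i : Fin (n + 1))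
    (t : (Fin (n + 1) → Y) × (Fin (n + 1) → X)) : (Fin n → Y) × (Fin n → X) :=
  (fun j => if (j : ℕ) < (i : ℕ)
      then hop (t.2 j.castSucc) (t.2 i) (t.1 j.castSucc) (t.1 i)
      else t.1 j.succ,
   fun j => if (j : ℕ) < (i : ℕ) then qop (t.2 j.castSucc) (t.2 i) else t.2 j.succ)

/-- `ρ_{n,i}` on generators: delete the `i`-th entries of both tuples. -/
def rhoTup {n : ℕ} (i : Fin (n + 1))
    (t : (Fin (n + 1) → Y) × (Fin (n + 1) → X)) : (Fin n → Y) × (Fin n → X) :=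
  (fun j => t.1 (i.succAbove j), fun j => t.2 (i.succAbove j))

section Helpers
variable (qop : X → X → X) (hop : X → X → Y → Y → Y)

lemma lam_lam
    (qdistrib : ∀ x1 x2 x3, qop (qop x1 x2) x3 = qop (qop x1 x3) (qop x2 x3))
    (hdistrib : ∀ x1 x2 x3 (y1 y2 y3 : Y),
      hop (qop x1 x2) x3 (hop x1 x2 y1 y2) y3 =
        hop (qop x1 x3) (qop x2 x3) (hop x1 x3 y1 y3) (hop x2 x3 y2 y3))
    {n : ℕ} (i j : Fin (n + 1)) (hij : (i : ℕ) ≤ (j : ℕ))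
    (t : (Fin (n + 2) → Y) × (Fin (n + 2) → X)) :
    lamTup qop hop i (lamTup qop hop j.succ t) =
      lamTup qop hop j (lamTup qop hop i.castSucc t) := by
  refine Prod.ext (funext fun k => ?_) (funext fun k => ?_) <;>
  · simp only [lamTup, Fin.coe_castSucc, Fin.val_succ, Fin.succ_castSucc]
    split_ifs <;> first
      | rfl
      | omega
      | exact (hdistrib _ _ _ _ _ _).symm
      | exact (qdistrib _ _ _).symm
      | exact hdistrib _ _ _ _ _ _
      | exact qdistrib _ _ _

lemma rho_rho {n : ℕ} (i j : Fin (n + 1)) (hij : (i : ℕ) ≤ (j : ℕ))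
    (t : (Fin (n + 2) → Y) × (Fin (n + 2) → X)) :
    rhoTup i (rhoTup j.succ t) = rhoTup j (rhoTup i.castSucc t) := by
  refine Prod.ext (funext fun k => ?_) (funext fun k => ?_) <;>
  · simp only [rhoTup, Fin.succAbove, Fin.lt_def, Fin.coe_castSucc, Fin.val_succ,
      Fin.succ_castSucc]
    split_ifs <;> (try simp only [Fin.lt_def, Fin.coe_castSucc, Fin.val_succ] at *) <;>
      first
        | rfl
        | omega
        | (congr 1 <;>
            first
              | rfl
              | exact Fin.ext (by simp only [Fin.coe_castSucc, Fin.val_succ]; omega)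
              | exact congrArg _ (Fin.ext (by simp only [Fin.coe_castSucc, Fin.val_succ]; omega)))

lemma lam_rho {n : ℕ} (i j : Fin (n + 1)) (hij : (i : ℕ) ≤ (j : ℕ))
    (t : (Fin (n + 2) → Y) × (Fin (n + 2) → X)) :
    lamTup qop hop i (rhoTup j.succ t) = rhoTup j (lamTup qop hop i.castSucc t) := by
  refine Prod.ext (funext fun k => ?_) (funext fun k => ?_) <;>
  · simp only [lamTup, rhoTup, Fin.succAbove, Fin.lt_def, Fin.coe_castSucc, Fin.val_succ,
      Fin.succ_castSucc]
    split_ifs <;> (try simp only [Fin.lt_def, Fin.coe_castSucc, Fin.val_succ] at *) <;>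
      first
        | rfl
        | omega
        | (congr 1 <;>
            first
              | rfl
              | exact Fin.ext (by simp only [Fin.coe_castSucc, Fin.val_succ]; omega)
              | exact congrArg _ (Fin.ext (by simp only [Fin.coe_castSucc, Fin.val_succ]; omega)))

lemma rho_lam {n : ℕ} (i j : Fin (n + 1)) (hij : (i : ℕ) ≤ (j : ℕ))
    (t : (Fin (n + 2) → Y) × (Fin (n + 2) → X)) :
    rhoTup i (lamTup qop hop j.succ t) = lamTup qop hop j (rhoTup i.castSucc t) := by
  refine Prod.ext (funext fun k => ?_) (funext fun k => ?_) <;>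
  · simp only [lamTup, rhoTup, Fin.succAbove, Fin.lt_def, Fin.coe_castSucc, Fin.val_succ,
      Fin.succ_castSucc]
    split_ifs <;> (try simp only [Fin.lt_def, Fin.coe_castSucc, Fin.val_succ] at *) <;>
      first
        | rfl
        | omega
        | (congr 1 <;>
            first
              | rfl
              | exact Fin.ext (by simp only [Fin.coe_castSucc, Fin.val_succ]; omega)
              | exact congrArg _ (Fin.ext (by simp only [Fin.coe_castSucc, Fin.val_succ]; omega)))


end Helpers

/-- The linear map `λ_{n,i} : V_{n+1} → V_n`. -/
noncomputable def lamMap (K : Type*) [CommRing K] (qop : X → X → X)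
    (hop : X → X → Y → Y → Y) (n : ℕ) (i : Fin (n + 1)) :
    V K X Y (n + 1) →ₗ[K] V K X Y n :=
  Finsupp.lmapDomain K K (lamTup qop hop i)

/-- The linear map `ρ_{n,i} : V_{n+1} → V_n`. -/
noncomputable def rhoMap (K : Type*) [CommRing K] (n : ℕ) (i : Fin (n + 1)) :
    V K X Y (n + 1) →ₗ[K] V K X Y n :=
  Finsupp.lmapDomain K K (rhoTup i)

/-- `l_n = Σ_i (-1)^{i+1} λ_{n,i}` (written with `0`-based indices). -/
noncomputable def lMap (K : Type*) [CommRing K] (qop : X → X → X)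
    (hop : X → X → Y → Y → Y) (n : ℕ) : V K X Y (n + 1) →ₗ[K] V K X Y n :=
  ∑ i : Fin (n + 1), ((-1 : K) ^ (i : ℕ)) • lamMap K qop hop n i

/-- `r_n = Σ_i (-1)^{i+1} ρ_{n,i}` (written with `0`-based indices). -/
noncomputable def rMap (K : Type*) [CommRing K] (n : ℕ) :
    V K X Y (n + 1) →ₗ[K] V K X Y n :=
  ∑ i : Fin (n + 1), ((-1 : K) ^ (i : ℕ)) • rhoMap (X := X) (Y := Y) K n i

/-- The boundary map `∂_n = l_n − r_n`. -/
noncomputable def bnd (K : Type*) [CommRing K] (qop : X → X → X)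
    (hop : X → X → Y → Y → Y) (n : ℕ) : V K X Y (n + 1) →ₗ[K] V K X Y n :=
  lMap K qop hop n - rMap K n


noncomputable def Dm (K : Type*) [CommRing K] (qop : X → X → X)
    (hop : X → X → Y → Y → Y) (n : ℕ) (i : Fin (n + 1)) :
    V K X Y (n + 1) →ₗ[K] V K X Y n :=
  lamMap K qop hop n i - rhoMap K n i

lemma comp_lmap (K : Type*) [CommRing K] {α β γ : Type*} (g g' : β → γ) (f f' : α → β)
    (h : ∀ a, g (f a) = g' (f' a)) :
    (Finsupp.lmapDomain K K g).comp (Finsupp.lmapDomain K K f)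
      = (Finsupp.lmapDomain K K g').comp (Finsupp.lmapDomain K K f') := by
  rw [← Finsupp.lmapDomain_comp, ← Finsupp.lmapDomain_comp]
  exact congrArg _ (funext h)

lemma D_comp (K : Type*) [CommRing K] (qop : X → X → X) (hop : X → X → Y → Y → Y)
    (qdistrib : ∀ x1 x2 x3, qop (qop x1 x2) x3 = qop (qop x1 x3) (qop x2 x3))
    (hdistrib : ∀ x1 x2 x3 (y1 y2 y3 : Y),
      hop (qop x1 x2) x3 (hop x1 x2 y1 y2) y3 =
        hop (qop x1 x3) (qop x2 x3) (hop x1 x3 y1 y3) (hop x2 x3 y2 y3))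
    {n : ℕ} (i j : Fin (n + 1)) (hij : (i : ℕ) ≤ (j : ℕ)) :
    (Dm K qop hop n i).comp (Dm K qop hop (n+1) j.succ)
      = (Dm K qop hop n j).comp (Dm K qop hop (n+1) i.castSucc) := by
  have h1 := comp_lmap K _ _ _ _ (lam_lam qop hop qdistrib hdistrib i j hij)
  have h2 := comp_lmap K _ _ _ _ (lam_rho qop hop i j hij)
  have h3 := comp_lmap K _ _ _ _ (rho_lam qop hop i j hij)
  have h4 := comp_lmap K _ _ _ _ (rho_rho (X := X) (Y := Y) i j hij)
  simp only [Dm, lamMap, rhoMap, LinearMap.sub_comp, LinearMap.comp_sub, h1, h2, h3, h4]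
  abel

lemma comp_sum_expand (K : Type*) [CommRing K] {M₀ M₁ M₂ : Type*}
    [AddCommGroup M₀] [AddCommGroup M₁] [AddCommGroup M₂]
    [Module K M₀] [Module K M₁] [Module K M₂]
    {ι κ : Type*} [Fintype ι] [Fintype κ] (c : ι → K) (d : κ → K)
    (F : ι → M₁ →ₗ[K] M₂) (G : κ → M₀ →ₗ[K] M₁) :
    (∑ i, c i • F i).comp (∑ j, d j • G j)
      = ∑ i, ∑ j, (c i * d j) • (F i).comp (G j) := by
  ext x
  simp [LinearMap.coe_sum, Finset.sum_apply, map_sum, Finset.smul_sum, smul_smul, mul_comm]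

lemma S_step (K : Type*) [CommRing K] (qop : X → X → X) (hop : X → X → Y → Y → Y)
    (qdistrib : ∀ x1 x2 x3, qop (qop x1 x2) x3 = qop (qop x1 x3) (qop x2 x3))
    (hdistrib : ∀ x1 x2 x3 (y1 y2 y3 : Y),
      hop (qop x1 x2) x3 (hop x1 x2 y1 y2) y3 =
        hop (qop x1 x3) (qop x2 x3) (hop x1 x3 y1 y3) (hop x2 x3 y2 y3))
    {n : ℕ} (i : Fin (n + 1)) (j : Fin (n + 2)) (a : Fin (n + 1)) (b : Fin (n + 2))
    (ha : (a : ℕ) = (j : ℕ) - 1) (hb : (b : ℕ) = (i : ℕ)) (hij : (i : ℕ) < (j : ℕ)) :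
    ((-1:K)^(i:ℕ) * (-1:K)^(j:ℕ)) • (Dm K qop hop n i).comp (Dm K qop hop (n+1) j)
      = -(((-1:K)^(a:ℕ) * (-1:K)^(b:ℕ)) •
          (Dm K qop hop n a).comp (Dm K qop hop (n+1) b)) := by
  have h1 : j = a.succ := Fin.ext (by simp only [Fin.val_succ]; omega)
  have h2 : b = i.castSucc := Fin.ext (by simp only [Fin.coe_castSucc]; omega)
  have hia : (i : ℕ) ≤ (a : ℕ) := by omega
  rw [h1, h2, D_comp K qop hop qdistrib hdistrib i a hia]
  have hc : ((-1:K) ^ (i:ℕ) * (-1:K) ^ ((a.succ : Fin (n+2)) : ℕ))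
      = -((-1:K) ^ (a:ℕ) * (-1:K) ^ ((i.castSucc : Fin (n+2)) : ℕ)) := by
    simp only [Fin.val_succ, Fin.coe_castSucc, pow_succ]
    ring
  rw [hc]
  exact neg_smul (R := K) (M := V K X Y (n+2) →ₗ[K] V K X Y n) _ _

set_option maxHeartbeats 1600000

/-- `∂_{n−1} ∘ ∂_n = 0`, i.e. `(V_n, ∂_n)` is a chain complex. -/
theorem boundary_squared_zero (K : Type*) [CommRing K] (qop : X → X → X) (hop : X → X → Y → Y → Y)
    (qidem : ∀ x, qop x x = x)
    (qbij : ∀ a, Function.Bijective fun x => qop x a)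
    (qdistrib : ∀ x1 x2 x3, qop (qop x1 x2) x3 = qop (qop x1 x3) (qop x2 x3))
    (hidem : ∀ x y, hop x x y y = y)
    (hbij : ∀ x1 x2 (a : Y), Function.Bijective fun y => hop x1 x2 y a)
    (hdistrib : ∀ x1 x2 x3 (y1 y2 y3 : Y),
      hop (qop x1 x2) x3 (hop x1 x2 y1 y2) y3 =
        hop (qop x1 x3) (qop x2 x3) (hop x1 x3 y1 y3) (hop x2 x3 y2 y3))
    (n : ℕ) :
    (bnd K qop hop n).comp (bnd K qop hop (n + 1)) = 0 := by
  classical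
  have hbnd : ∀ m : ℕ, bnd K qop hop m
      = ∑ i : Fin (m+1), ((-1:K)^(i:ℕ)) • Dm K qop hop m i := by
    intro m
    simp only [bnd, lMap, rMap, Dm]
    exact ((Finset.sum_congr rfl fun (i : Fin (m+1)) _ =>
        smul_sub ((-1:K)^(i:ℕ)) (lamMap K qop hop m i) (rhoMap K m i)).trans
      (Finset.sum_sub_distrib (G := V K X Y (m+1) →ₗ[K] V K X Y m) _ _)).symm
  rw [hbnd, hbnd, comp_sum_expand]
  set S : Fin (n+1) × Fin (n+2) → (V K X Y (n+2) →ₗ[K] V K X Y n) :=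
    fun p => ((-1:K)^(p.1:ℕ) * (-1:K)^(p.2:ℕ)) •
      (Dm K qop hop n p.1).comp (Dm K qop hop (n+1) p.2) with hS
  have htot : (∑ i : Fin (n+1), ∑ j : Fin (n+2),
      ((-1:K)^(i:ℕ) * (-1:K)^(j:ℕ)) •
        (Dm K qop hop n i).comp (Dm K qop hop (n+1) j))
      = ∑ p : Fin (n+1) × Fin (n+2), S p := by
    rw [Fintype.sum_prod_type]
  rw [htot]
  have hsplit := Finset.sum_filter_add_sum_filter_not Finset.univ
    (fun p : Fin (n+1) × Fin (n+2) => (p.1 : ℕ) < (p.2 : ℕ)) S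
  have hneg : (∑ p ∈ Finset.univ.filter
        (fun p : Fin (n+1) × Fin (n+2) => (p.1 : ℕ) < (p.2 : ℕ)), S p)
      = ∑ p ∈ Finset.univ.filter
        (fun p : Fin (n+1) × Fin (n+2) => ¬ (p.1 : ℕ) < (p.2 : ℕ)), (- S p) := by
    refine Finset.sum_bij'
      (fun p hp => (⟨(p.2 : ℕ) - 1, by have := p.2.isLt; omega⟩, p.1.castSucc))
      (fun q hq => (⟨(q.2 : ℕ), by
          have h := (Finset.mem_filter.mp hq).2
          have := q.1.isLt; omega⟩,
        ⟨(q.1 : ℕ) + 1, by have := q.1.isLt; omega⟩))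
      ?_ ?_ ?_ ?_ ?_
    · intro p hp
      have h := (Finset.mem_filter.mp hp).2
      simp only [Finset.mem_filter, Finset.mem_univ, true_and, Fin.coe_castSucc]
      omega
    · intro q hq
      have h := (Finset.mem_filter.mp hq).2
      simp only [Finset.mem_filter, Finset.mem_univ, true_and]
      omega
    · intro p hp
      have h := (Finset.mem_filter.mp hp).2
      refine Prod.ext (Fin.ext ?_) (Fin.ext ?_) <;> simp <;> omega
    · intro q hq
      have h := (Finset.mem_filter.mp hq).2
      refine Prod.ext (Fin.ext ?_) (Fin.ext ?_) <;> simp <;> omega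
    · intro p hp
      have h := (Finset.mem_filter.mp hp).2
      simp only [hS]
      exact S_step K qop hop qdistrib hdistrib p.1 p.2 _ _ (by simp) (by simp) h
  have hflip : (∑ p ∈ Finset.univ.filter
        (fun p : Fin (n+1) × Fin (n+2) => ¬ (p.1 : ℕ) < (p.2 : ℕ)), (- S p))
      = - ∑ p ∈ Finset.univ.filter
        (fun p : Fin (n+1) × Fin (n+2) => ¬ (p.1 : ℕ) < (p.2 : ℕ)), S p := by
    exact Finset.sum_neg_distrib (G := V K X Y (n+2) →ₗ[K] V K X Y n) _
  rw [hneg, hflip] at hsplit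
  rw [← hsplit]
  exact neg_add_cancel (∑ p ∈ Finset.univ.filter
    (fun p : Fin (n+1) × Fin (n+2) => ¬ (p.1 : ℕ) < (p.2 : ℕ)), S p)


end Stmt8
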